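/- In the group L(2,3,3) (generators x̄₁, x̄₂, x̄₃ with 2x̄₁ = 3x̄₂ = 3x̄₃), the element ū = x̄₂ − x̄₃ has order exactly three and generates the torsion subgroup of L(2,3,3); moreover, with ω̄ = c̄ − x̄₁ − x̄₂ − x̄₃ one has x̄₁ = −3ω̄. -/

import Mathlib

/-- The subgroup of relations defining the group `L(a,b,c)`. -/
def Lrel (a b c : ℤ) : AddSubgroup (ℤ × ℤ × ℤ) :=
  AddSubgroup.closure {((a, -b, 0) : ℤ × ℤ × ℤ), (0, b, -c)}

/-- The rank-one abelian group `L(a,b,c)` on generators `x̄₁, x̄₂, x̄₃` with relations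
`a·x̄₁ = b·x̄₂ = c·x̄₃`, realized as the quotient of `ℤ³` by those relations. -/
abbrev Lgrp (a b c : ℤ) : Type := (ℤ × ℤ × ℤ) ⧸ Lrel a b c

/-- The generator `x̄₁` of `L(a,b,c)`. -/
def Lx₁ (a b c : ℤ) : Lgrp a b c := QuotientAddGroup.mk (1, 0, 0)

/-- The generator `x̄₂` of `L(a,b,c)`. -/
def Lx₂ (a b c : ℤ) : Lgrp a b c := QuotientAddGroup.mk (0, 1, 0)

/-- The generator `x̄₃` of `L(a,b,c)`. -/
def Lx₃ (a b c : ℤ) : Lgrp a b c := QuotientAddGroup.mk (0, 0, 1)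

/-- The canonical element `c̄ = a·x̄₁` of `L(a,b,c)`. -/
def Lc (a b c : ℤ) : Lgrp a b c := a • Lx₁ a b c

/-- The dualizing element `ω̄ = c̄ − x̄₁ − x̄₂ − x̄₃` of `L(a,b,c)`. -/
def Lω (a b c : ℤ) : Lgrp a b c := Lc a b c - Lx₁ a b c - Lx₂ a b c - Lx₃ a b c

def myf : (ℤ × ℤ × ℤ) →+ ℤ where
  toFun p := 3 * p.1 + 2 * p.2.1 + 2 * p.2.2
  map_zero' := by simp
  map_add' p q := by simp [Prod.fst_add, Prod.snd_add]; ring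

def myg : (ℤ × ℤ × ℤ) →+ ZMod 3 where
  toFun p := (p.2.1 : ZMod 3) - (p.2.2 : ZMod 3)
  map_zero' := by simp
  map_add' p q := by push_cast [Prod.fst_add, Prod.snd_add]; ring

lemma mem_Lrel (p : ℤ × ℤ × ℤ) :
    p ∈ Lrel 2 3 3 ↔ myf p = 0 ∧ myg p = 0 := by
  constructor
  · intro hp
    have h1 : Lrel 2 3 3 ≤ myf.ker ⊓ myg.ker := by
      rw [Lrel, AddSubgroup.closure_le]
      rintro q hq
      simp only [Set.mem_insert_iff, Set.mem_singleton_iff] at hq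
      rcases hq with rfl | rfl <;>
        simp [AddMonoidHom.mem_ker, myf, myg] <;> decide
    exact h1 hp
  · rintro ⟨hf, hg⟩
    obtain ⟨x, y, z⟩ := p
    simp only [myf, AddMonoidHom.coe_mk, ZeroHom.coe_mk] at hf
    simp only [myg, AddMonoidHom.coe_mk, ZeroHom.coe_mk] at hg
    have hg' : (3 : ℤ) ∣ y - z := by
      have := (ZMod.intCast_zmod_eq_zero_iff_dvd (y - z) 3).mp (by push_cast; rw [hg])
      exact_mod_cast this
    obtain ⟨k, hk⟩ := hg'
    have hy : (3 : ℤ) ∣ y := by omega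
    have hz : (3 : ℤ) ∣ z := by omega
    obtain ⟨s, hs⟩ := hy
    obtain ⟨t, ht⟩ := hz
    have : (x, y, z) = (-(s+t)) • ((2, -3, 0) : ℤ × ℤ × ℤ) + (-t) • ((0, 3, -3) : ℤ × ℤ × ℤ) := by
      simp [Prod.ext_iff]
      omega
    rw [this]
    exact AddSubgroup.add_mem _
      (AddSubgroup.zsmul_mem _ (AddSubgroup.subset_closure (by simp)) _)
      (AddSubgroup.zsmul_mem _ (AddSubgroup.subset_closure (by simp)) _)

def myF : Lgrp 2 3 3 →+ ℤ :=
  QuotientAddGroup.lift (Lrel 2 3 3) myf (fun x hx => ((mem_Lrel x).mp hx).1)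

def myG : Lgrp 2 3 3 →+ ZMod 3 :=
  QuotientAddGroup.lift (Lrel 2 3 3) myg (fun x hx => ((mem_Lrel x).mp hx).2)

theorem stmt_16 :
    addOrderOf (Lx₂ 2 3 3 - Lx₃ 2 3 3) = 3 ∧
    (∀ v : Lgrp 2 3 3, IsOfFinAddOrder v → ∃ m : ℤ, v = m • (Lx₂ 2 3 3 - Lx₃ 2 3 3)) ∧
    Lx₁ 2 3 3 = (-3 : ℤ) • Lω 2 3 3 := by
  have hu : Lx₂ 2 3 3 - Lx₃ 2 3 3 = QuotientAddGroup.mk (0, 1, -1) := by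
    rw [Lx₂, Lx₃, ← QuotientAddGroup.mk_sub]
    rfl
  refine ⟨?_, ?_, ?_⟩
  · haveI : Fact (Nat.Prime 3) := ⟨by norm_num⟩
    apply addOrderOf_eq_prime
    · rw [hu, ← QuotientAddGroup.mk_nsmul, QuotientAddGroup.eq_zero_iff]
      have h : (3:ℕ) • (((0:ℤ),(1:ℤ),(-1:ℤ)) : ℤ×ℤ×ℤ) = ((0:ℤ),(3:ℤ),(-3:ℤ)) := by
        simp [Prod.ext_iff]
      rw [h, Lrel]
      exact AddSubgroup.subset_closure (by simp)
    · rw [hu, Ne, QuotientAddGroup.eq_zero_iff, mem_Lrel]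
      intro h
      have := h.2
      simp only [myg, AddMonoidHom.coe_mk, ZeroHom.coe_mk] at this
      exact absurd this (by decide)
  · intro v hv
    obtain ⟨p, rfl⟩ := QuotientAddGroup.mk_surjective v
    obtain ⟨x, y, z⟩ := p
    obtain ⟨n, hn, hnv⟩ := (isOfFinAddOrder_iff_nsmul_eq_zero).mp hv
    have hF : (n : ℤ) * myf (x, y, z) = 0 := by
      have := congrArg myF hnv
      simp only [map_nsmul, map_zero, nsmul_eq_mul] at this
      simpa [show myF (QuotientAddGroup.mk (x, y, z)) = myf (x, y, z) from rfl] using this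
    have hf0 : myf (x, y, z) = 0 := by
      rcases mul_eq_zero.mp hF with h | h
      · exact absurd (by exact_mod_cast h) (by omega)
      · exact h
    simp only [myf, AddMonoidHom.coe_mk, ZeroHom.coe_mk] at hf0
    refine ⟨2 * (y - z), ?_⟩
    rw [hu, ← QuotientAddGroup.mk_zsmul, QuotientAddGroup.eq]
    have he : -((x, y, z) : ℤ × ℤ × ℤ) + (2 * (y - z)) • ((0 : ℤ), (1 : ℤ), (-1 : ℤ))
        = (-x, 2 * (y - z) - y, -(2 * (y - z)) - z) := by
      simp [Prod.ext_iff, Prod.fst_add, Prod.snd_add]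
      constructor <;> ring
    rw [he, mem_Lrel]
    have h3 : ((3 * (y - z) : ℤ) : ZMod 3) = 0 := by
      rw [ZMod.intCast_zmod_eq_zero_iff_dvd]
      exact ⟨y - z, rfl⟩
    push_cast at h3
    constructor
    · simp only [myf, AddMonoidHom.coe_mk, ZeroHom.coe_mk]
      omega
    · simp only [myg, AddMonoidHom.coe_mk, ZeroHom.coe_mk]
      push_cast
      linear_combination h3
  · have hω : Lω 2 3 3 = QuotientAddGroup.mk (1, -1, -1) := by
      rw [Lω, Lc, Lx₁, Lx₂, Lx₃, ← QuotientAddGroup.mk_zsmul,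
        ← QuotientAddGroup.mk_sub, ← QuotientAddGroup.mk_sub, ← QuotientAddGroup.mk_sub]
      rfl
    rw [hω, Lx₁, ← QuotientAddGroup.mk_zsmul, QuotientAddGroup.eq]
    rw [mem_Lrel]
    constructor <;> simp [myf, myg, Prod.fst_add, Prod.snd_add]
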